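/- Let φ ∈ H¹(0,∞) with ∫₀^∞ (φ')² + a² φ² dt = 1 for some a > 0. Then the value of ∫₀^{1/2} φ² dt is at most 1/(κ(a) + a²), where κ(a) is the smallest positive root of √κ tan(√κ/2) = a. -/

import Mathlib

open MeasureTheory Real Set

set_option maxHeartbeats 1000000


lemma root_lt_pi_sq (a κ : ℝ) (ha : 0 < a)
    (hκ : 0 < κ ∧ Real.sqrt κ * Real.tan (Real.sqrt κ / 2) = a ∧
      ∀ κ' : ℝ, 0 < κ' → Real.sqrt κ' * Real.tan (Real.sqrt κ' / 2) = a → κ ≤ κ') :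
    Real.sqrt κ < π := by
  obtain ⟨hκ0, hroot, hmin⟩ := hκ
  set b : ℝ := max (Real.arctan a) (1/2) with hb
  have hb0 : (1:ℝ)/2 ≤ b := le_max_right _ _
  have hbpi : b < π / 2 := by
    apply max_lt (Real.arctan_lt_pi_div_two a)
    nlinarith [Real.pi_gt_three]
  have hcont : ContinuousOn (fun x : ℝ => 2 * x * Real.tan x) (Icc 0 b) := by
    apply ContinuousOn.mul (by fun_prop)
    intro x hx
    exact (Real.continuousAt_tan.2 (Real.cos_pos_of_mem_Ioo
      ⟨by nlinarith [hx.1, Real.pi_gt_three], lt_of_le_of_lt hx.2 hbpi⟩).ne').continuousWithinAt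
  have htb : a ≤ Real.tan b := by
    calc a = Real.tan (Real.arctan a) := (Real.tan_arctan a).symm
      _ ≤ Real.tan b := by
        apply Real.strictMonoOn_tan.monotoneOn ?_ ?_ (le_max_left _ _)
        · exact ⟨by nlinarith [Real.arctan_zero ▸ Real.arctan_strictMono.le_iff_le.2 ha.le, Real.pi_gt_three],
            Real.arctan_lt_pi_div_two a⟩
        · exact ⟨by nlinarith [Real.pi_gt_three], hbpi⟩
  have hfb : a ≤ 2 * b * Real.tan b := by nlinarith
  have himg := intermediate_value_Icc (by linarith : (0:ℝ) ≤ b) hcont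
  have hmem : a ∈ Icc ((fun x : ℝ => 2 * x * Real.tan x) 0) ((fun x : ℝ => 2 * x * Real.tan x) b) := by
    constructor
    · simpa using ha.le
    · simpa using hfb
  obtain ⟨x₀, hx₀mem, hx₀⟩ := himg hmem
  simp only at hx₀
  have hx₀pos : 0 < x₀ := by
    rcases eq_or_lt_of_le hx₀mem.1 with h | h
    · exfalso; rw [← h] at hx₀; simp at hx₀; linarith
    · exact h
  have hx₀lt : x₀ < π / 2 := lt_of_le_of_lt hx₀mem.2 hbpi
  have hκ' : κ ≤ (2 * x₀) ^ 2 := by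
    apply hmin _ (by positivity)
    rw [Real.sqrt_sq (by positivity), show 2 * x₀ / 2 = x₀ by ring]
    linarith
  calc Real.sqrt κ ≤ Real.sqrt ((2*x₀)^2) := Real.sqrt_le_sqrt hκ'
    _ = 2 * x₀ := Real.sqrt_sq (by positivity)
    _ < π := by linarith


lemma exists_large_small (f : ℝ → ℝ) (hf : IntegrableOn f (Ioi 0))
    (δ : ℝ) (hδ : 0 < δ) (N : ℝ) : ∃ T, N < T ∧ f T < δ := by
  by_contra hcon
  push_neg at hcon
  set M : ℝ := max N 0 with hM
  have hsub : Ioi M ⊆ Ioi (0:ℝ) := Ioi_subset_Ioi (le_max_right _ _)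
  have hint : Integrable f (volume.restrict (Ioi M)) := hf.mono_set hsub
  have hlt := hint.measure_ge_lt_top hδ
  have hge : Ioi M ⊆ {x | δ ≤ f x} := fun x hx => hcon x (lt_of_le_of_lt (le_max_left _ _) hx)
  have h1 : (volume.restrict (Ioi M)) (Ioi M) = ⊤ := by
    rw [Measure.restrict_apply_self, Real.volume_Ioi]
  have := lt_of_le_of_lt (h1 ▸ measure_mono hge) hlt
  exact lt_irrefl _ this


lemma key_estimate (a κ ω : ℝ) (ha : 0 < a) (hκ0 : 0 < κ)
    (hω0 : 0 < ω) (hωπ : ω < π) (hωκ : ω ^ 2 = κ) (hroot : ω * Real.tan (ω / 2) = a)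
    (φ : ℝ → ℝ) (hdiff : ∀ t ∈ Ioi (0:ℝ), DifferentiableAt ℝ φ t)
    (hφ2 : IntegrableOn (fun t => φ t ^ 2) (Ioi 0))
    (hφ'2 : IntegrableOn (fun t => deriv φ t ^ 2) (Ioi 0))
    (hnorm : (∫ t in Ioi (0:ℝ), (deriv φ t ^ 2 + a ^ 2 * φ t ^ 2)) = 1)
    (ε T : ℝ) (hε0 : 0 < ε) (hε2 : ε < 1/2) (hT : 1/2 < T) :
    (κ + a ^ 2) * ∫ t in Ioo ε (1/2), φ t ^ 2 ≤ 1 + a * φ T ^ 2 := by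
  have hπ : 0 < π := Real.pi_pos
  set h : ℝ → ℝ := fun t => if t < 1/2 then -(ω * Real.tan (ω * t)) else -a with hh
  set g : ℝ → ℝ := fun t => h t * φ t ^ 2 with hg
  set X : ℝ → ℝ := fun t => deriv φ t ^ 2 + a ^ 2 * φ t ^ 2 with hXdef
  set D1 : ℝ → ℝ := fun t => (-κ - h t ^ 2) * φ t ^ 2 + h t * (2 * φ t * deriv φ t) with hD1def
  set D2 : ℝ → ℝ := fun t => -a * (2 * φ t * deriv φ t) with hD2def
  -- basic facts about h
  have hcos : ∀ x : ℝ, 0 ≤ x → x ≤ 1/2 → 0 < Real.cos (ω * x) := by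
    intro x hx0 hx2
    apply Real.cos_pos_of_mem_Ioo
    constructor
    · nlinarith
    · nlinarith
  have htan_nonneg : ∀ x : ℝ, 0 ≤ x → x ≤ 1/2 → 0 ≤ Real.tan (ω * x) := by
    intro x hx0 hx2
    rw [Real.tan_eq_sin_div_cos]
    apply div_nonneg _ (hcos x hx0 hx2).le
    apply Real.sin_nonneg_of_nonneg_of_le_pi (by positivity)
    nlinarith
  have htan_le : ∀ x : ℝ, 0 ≤ x → x ≤ 1/2 → Real.tan (ω * x) ≤ Real.tan (ω / 2) := by
    intro x hx0 hx2
    apply Real.strictMonoOn_tan.monotoneOn ⟨by nlinarith, by nlinarith⟩ ⟨by nlinarith, by nlinarith⟩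
    nlinarith
  have hneg : ∀ x : ℝ, 0 ≤ x → h x ≤ 0 := by
    intro x hx0
    rw [hh]
    by_cases hx : x < 1/2
    · simp only [if_pos hx]
      have := htan_nonneg x hx0 hx.le
      nlinarith
    · simp only [if_neg hx]; linarith
  have hbound : ∀ x : ℝ, 0 ≤ x → |h x| ≤ a := by
    intro x hx0
    rw [abs_of_nonpos (hneg x hx0), hh]
    by_cases hx : x < 1/2
    · simp only [if_pos hx, neg_neg]
      have h1 := htan_le x hx0 hx.le
      have h2 := htan_nonneg x hx0 hx.le
      nlinarith
    · simp only [if_neg hx, neg_neg]; exact le_refl a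
  have hsqbound : ∀ x : ℝ, 0 ≤ x → h x ^ 2 ≤ a ^ 2 := by
    intro x hx0
    have := hbound x hx0
    nlinarith [abs_nonneg (h x), sq_abs (h x)]
  have hmeash : Measurable h := by
    apply Measurable.ite measurableSet_Iio
    · have hmtan : Measurable Real.tan := by
        have : Real.tan = fun x => Real.sin x / Real.cos x := funext fun x => Real.tan_eq_sin_div_cos x
        rw [this]
        exact Real.continuous_sin.measurable.div Real.continuous_cos.measurable
      exact ((measurable_const.mul (hmtan.comp (measurable_id.const_mul ω)))).neg
    · exact measurable_const
  -- continuity / measurability of φ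
  have hφcont : ContinuousOn φ (Ioi 0) := fun t ht => (hdiff t ht).continuousAt.continuousWithinAt
  have mφ : AEStronglyMeasurable φ (volume.restrict (Ioi 0)) :=
    hφcont.aestronglyMeasurable measurableSet_Ioi
  have mφ' : AEStronglyMeasurable (deriv φ) (volume.restrict (Ioi 0)) :=
    (measurable_deriv φ).aestronglyMeasurable
  -- integrability
  have hX : IntegrableOn X (Ioi 0) := hφ'2.add (hφ2.const_mul _)
  have hφφ' : IntegrableOn (fun t => φ t * deriv φ t) (Ioi 0) := by
    have hgint : IntegrableOn (fun t => (1/2 : ℝ) * (φ t ^ 2 + deriv φ t ^ 2)) (Ioi 0) := by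
      have := (hφ2.add hφ'2).const_mul (1/2 : ℝ); exact this
    apply Integrable.mono' hgint (mφ.mul mφ')
    filter_upwards with t
    simp only [Real.norm_eq_abs, Pi.mul_apply, abs_mul]
    nlinarith [sq_abs (φ t), sq_abs (deriv φ t), sq_nonneg (|φ t| - |deriv φ t|),
      abs_nonneg (φ t), abs_nonneg (deriv φ t)]
  have hD1int : IntegrableOn D1 (Ioi 0) := by
    have hgint : IntegrableOn
        (fun t => (κ + a ^ 2) * φ t ^ 2 + a * (φ t ^ 2 + deriv φ t ^ 2)) (Ioi 0) := by
      have h1 := hφ2.const_mul (κ + a ^ 2)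
      have h2 := (hφ2.add hφ'2).const_mul a
      have := h1.add h2; exact this
    apply Integrable.mono' hgint
    · apply AEStronglyMeasurable.add
      · exact ((aestronglyMeasurable_const.sub
          ((hmeash.pow_const 2).aestronglyMeasurable)).mul (mφ.pow 2))
      · exact (hmeash.aestronglyMeasurable.mul ((mφ.const_mul 2).mul mφ'))
    · rw [ae_restrict_iff' measurableSet_Ioi]
      filter_upwards with t ht
      have e1 := hbound t (le_of_lt ht)
      have e1' := abs_le.1 e1
      have e2 := hsqbound t (le_of_lt ht)
      simp only [Real.norm_eq_abs, abs_le, hD1def]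
      constructor
      · nlinarith [mul_nonneg (by linarith [e1'.2] : (0:ℝ) ≤ a - h t) (sq_nonneg (φ t + deriv φ t)),
          mul_nonneg (by linarith [e1'.1] : (0:ℝ) ≤ a + h t) (sq_nonneg (φ t - deriv φ t)),
          sq_nonneg (φ t), sq_nonneg (deriv φ t)]
      · nlinarith [mul_nonneg (by linarith [e1'.2] : (0:ℝ) ≤ a - h t) (sq_nonneg (φ t + deriv φ t)),
          mul_nonneg (by linarith [e1'.1] : (0:ℝ) ≤ a + h t) (sq_nonneg (φ t - deriv φ t)),
          sq_nonneg (φ t), sq_nonneg (deriv φ t)]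
  have hD2int : IntegrableOn D2 (Ioi 0) := by
    have : D2 = fun t => (-2 * a) * (φ t * deriv φ t) := by
      funext t; rw [hD2def]; ring
    rw [this]
    exact hφφ'.const_mul _
  -- interval integrability on the two pieces
  have hsub1 : uIcc ε (1/2 : ℝ) ⊆ Ioi 0 := by
    rw [uIcc_of_le hε2.le]
    exact fun t ht => lt_of_lt_of_le hε0 ht.1
  have hsub2 : uIcc (1/2 : ℝ) T ⊆ Ioi 0 := by
    rw [uIcc_of_le hT.le]
    exact fun t ht => lt_of_lt_of_le (by norm_num) ht.1
  have hintD1 : IntervalIntegrable D1 volume ε (1/2) := (hD1int.mono_set hsub1).intervalIntegrable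
  have hintD2 : IntervalIntegrable D2 volume (1/2) T := (hD2int.mono_set hsub2).intervalIntegrable
  have hintX1 : IntervalIntegrable X volume ε (1/2) := (hX.mono_set hsub1).intervalIntegrable
  have hintX2 : IntervalIntegrable X volume (1/2) T := (hX.mono_set hsub2).intervalIntegrable
  have hintφ1 : IntervalIntegrable (fun t => φ t ^ 2) volume ε (1/2) :=
    (hφ2.mono_set hsub1).intervalIntegrable
  -- FTC on [ε, 1/2]
  have hgc1 : ContinuousOn g (Icc ε (1/2)) := by
    apply ContinuousOn.congr (f := fun t => -(ω * Real.tan (ω * t)) * φ t ^ 2)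
    · apply ContinuousOn.mul
      · apply ContinuousOn.neg
        apply ContinuousOn.mul continuousOn_const
        intro x hx
        have hx0 : (0:ℝ) < x := lt_of_lt_of_le hε0 hx.1
        exact ((Real.continuousAt_tan.2 (hcos x hx0.le hx.2).ne').comp
          (continuous_const.mul continuous_id).continuousAt).continuousWithinAt
      · exact ((hφcont.mono (fun t ht => lt_of_lt_of_le hε0 ht.1)).pow 2)
    · intro t ht
      have hht : h t = -(ω * Real.tan (ω * t)) := by
        by_cases h2 : t < 1/2
        · simp only [hh]; rw [if_pos h2]
        · have ht2 : t = 1/2 := le_antisymm ht.2 (not_lt.1 h2)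
          simp only [hh, ht2]
          rw [if_neg (by norm_num), show ω * (1/2 : ℝ) = ω / 2 by ring, hroot]
      show h t * φ t ^ 2 = -(ω * Real.tan (ω * t)) * φ t ^ 2
      rw [hht]
  have hder1 : ∀ x ∈ Ioo ε (1/2 : ℝ), HasDerivAt g (D1 x) x := by
    intro x hx
    have hx0 : (0:ℝ) < x := lt_trans hε0 hx.1
    have hcosx : Real.cos (ω * x) ≠ 0 := (hcos x hx0.le hx.2.le).ne'
    have htan : HasDerivAt (fun t => Real.tan (ω * t)) (1 / Real.cos (ω * x) ^ 2 * ω) x := by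
      exact (Real.hasDerivAt_tan hcosx).comp x (by simpa using (hasDerivAt_id x).const_mul ω)
    have hψ : HasDerivAt (fun t => -(ω * Real.tan (ω * t))) (-(ω * (1 / Real.cos (ω * x) ^ 2 * ω))) x :=
      (htan.const_mul ω).neg
    have hhx : HasDerivAt h (-(ω * (1 / Real.cos (ω * x) ^ 2 * ω))) x := by
      apply hψ.congr_of_eventuallyEq
      filter_upwards [Iio_mem_nhds hx.2] with t ht
      simp only [hh]; rw [if_pos (show t < 1/2 from ht)]
    have hφx : HasDerivAt φ (deriv φ x) x := (hdiff x hx0).hasDerivAt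
    have hgx : HasDerivAt g (-(ω * (1 / Real.cos (ω * x) ^ 2 * ω)) * φ x ^ 2
        + h x * (2 * φ x ^ 1 * deriv φ x)) x := hhx.mul (hφx.pow 2)
    convert hgx using 1
    have hhxval : h x = -(ω * Real.tan (ω * x)) := by simp only [hh]; rw [if_pos hx.2]
    have htan1 : Real.tan (ω * x) ^ 2 + 1 = 1 / Real.cos (ω * x) ^ 2 := by
      rw [Real.tan_eq_sin_div_cos]
      field_simp
      exact Real.sin_sq_add_cos_sq _
    have hcoeff : -κ - h x ^ 2 = -(ω * (1 / Real.cos (ω * x) ^ 2 * ω)) := by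
      rw [hhxval, ← hωκ]
      have hc2 : Real.cos (ω * x) ^ 2 ≠ 0 := pow_ne_zero 2 hcosx
      field_simp
      field_simp at htan1
      linear_combination (-1) * htan1
    simp only [hD1def]
    rw [hcoeff]
    ring
  have hFTC1 : ∫ t in ε..(1/2 : ℝ), D1 t = g (1/2) - g ε :=
    intervalIntegral.integral_eq_sub_of_hasDerivAt_of_le hε2.le hgc1 hder1 hintD1
  -- FTC on [1/2, T]
  have hgc2 : ContinuousOn g (Icc (1/2 : ℝ) T) := by
    apply ContinuousOn.congr (f := fun t => -a * φ t ^ 2)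
    · exact continuousOn_const.mul ((hφcont.mono (fun t ht => lt_of_lt_of_le (by norm_num) ht.1)).pow 2)
    · intro t ht
      have hht : h t = -a := by simp only [hh]; rw [if_neg (not_lt.2 ht.1)]
      show h t * φ t ^ 2 = -a * φ t ^ 2
      rw [hht]
  have hder2 : ∀ x ∈ Ioo (1/2 : ℝ) T, HasDerivAt g (D2 x) x := by
    intro x hx
    have hx0 : (0:ℝ) < x := lt_trans (by norm_num) hx.1
    have hφx : HasDerivAt φ (deriv φ x) x := (hdiff x hx0).hasDerivAt
    have hgx : HasDerivAt (fun t => -a * φ t ^ 2) (-a * (2 * φ x ^ 1 * deriv φ x)) x :=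
      (hφx.pow 2).const_mul (-a)
    have : HasDerivAt g (-a * (2 * φ x ^ 1 * deriv φ x)) x := by
      apply hgx.congr_of_eventuallyEq
      filter_upwards [Ioi_mem_nhds hx.1] with t ht
      have hht : h t = -a := by simp only [hh]; rw [if_neg (not_lt.2 (le_of_lt ht))]
      show h t * φ t ^ 2 = -a * φ t ^ 2
      rw [hht]
    convert this using 1
    rw [hD2def]; ring
  have hFTC2 : ∫ t in (1/2 : ℝ)..T, D2 t = g T - g (1/2) :=
    intervalIntegral.integral_eq_sub_of_hasDerivAt_of_le hT.le hgc2 hder2 hintD2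
  -- pointwise inequalities
  have hmono1 : ∫ t in ε..(1/2 : ℝ), D1 t ≤
      ∫ t in ε..(1/2 : ℝ), (X t - (κ + a ^ 2) * φ t ^ 2) := by
    apply intervalIntegral.integral_mono_on hε2.le hintD1
      (hintX1.sub (hintφ1.const_mul _))
    intro t _
    simp only [hD1def, hXdef]
    nlinarith [sq_nonneg (deriv φ t - h t * φ t)]
  have hmono2 : ∫ t in (1/2 : ℝ)..T, D2 t ≤ ∫ t in (1/2 : ℝ)..T, X t := by
    apply intervalIntegral.integral_mono_on hT.le hintD2 hintX2
    intro t _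
    simp only [hD2def, hXdef]
    nlinarith [sq_nonneg (deriv φ t + a * φ t)]
  -- total energy bound
  have hXsum : (∫ t in ε..(1/2 : ℝ), X t) + ∫ t in (1/2 : ℝ)..T, X t = ∫ t in ε..T, X t :=
    intervalIntegral.integral_add_adjacent_intervals hintX1 hintX2
  have hXle : ∫ t in ε..T, X t ≤ 1 := by
    rw [intervalIntegral.integral_of_le (by linarith), ← hnorm]
    apply setIntegral_mono_set hX
    · filter_upwards with t
      rw [hXdef]; positivity
    · apply HasSubset.Subset.eventuallyLE
      exact fun t ht => lt_trans hε0 ht.1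
  -- combine
  have hsplit : ∫ t in ε..(1/2 : ℝ), (X t - (κ + a ^ 2) * φ t ^ 2)
      = (∫ t in ε..(1/2 : ℝ), X t) - (κ + a ^ 2) * ∫ t in ε..(1/2 : ℝ), φ t ^ 2 := by
    rw [intervalIntegral.integral_sub hintX1 (hintφ1.const_mul _),
      intervalIntegral.integral_const_mul]
  have hgT : g T = -a * φ T ^ 2 := by
    have hht : h T = -a := by simp only [hh]; rw [if_neg (not_lt.2 hT.le)]
    show h T * φ T ^ 2 = -a * φ T ^ 2
    rw [hht]
  have hgε : g ε ≤ 0 := by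
    rw [hg]
    exact mul_nonpos_iff.2 (Or.inr ⟨hneg ε hε0.le, sq_nonneg _⟩)
  have hIoo : ∫ t in ε..(1/2 : ℝ), φ t ^ 2 = ∫ t in Ioo ε (1/2 : ℝ), φ t ^ 2 := by
    rw [intervalIntegral.integral_of_le hε2.le, integral_Ioc_eq_integral_Ioo]
  rw [← hIoo]
  have h1 : g (1/2) - g ε ≤ (∫ t in ε..(1/2:ℝ), X t) - (κ + a ^ 2) * ∫ t in ε..(1/2:ℝ), φ t ^ 2 := by
    rw [← hsplit, ← hFTC1]; exact hmono1
  have h2 : g T - g (1/2) ≤ ∫ t in (1/2:ℝ)..T, X t := by rw [← hFTC2]; exact hmono2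
  have h3 : -a * φ T ^ 2 - g ε ≤ 1 - (κ + a ^ 2) * ∫ t in ε..(1/2:ℝ), φ t ^ 2 := by
    rw [← hgT]
    linarith
  linarith

/-- `κ` is the smallest positive root of `√κ · tan(√κ/2) = a`. -/
def IsSmallestRoot (a κ : ℝ) : Prop :=
  0 < κ ∧ Real.sqrt κ * Real.tan (Real.sqrt κ / 2) = a ∧
    ∀ κ' : ℝ, 0 < κ' → Real.sqrt κ' * Real.tan (Real.sqrt κ' / 2) = a → κ ≤ κ'

/-- If `φ ∈ H¹(0,∞)` has energy `∫₀^∞ (φ')² + a²φ² = 1`, then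
`∫₀^{1/2} φ² ≤ 1/(κ(a) + a²)`. -/
theorem stmt3 (a κ : ℝ) (ha : 0 < a) (hκ : IsSmallestRoot a κ)
    (φ : ℝ → ℝ) (hdiff : ∀ t ∈ Ioi (0:ℝ), DifferentiableAt ℝ φ t)
    (hφ2 : IntegrableOn (fun t => φ t ^ 2) (Ioi 0))
    (hφ'2 : IntegrableOn (fun t => deriv φ t ^ 2) (Ioi 0))
    (hnorm : (∫ t in Ioi (0:ℝ), (deriv φ t ^ 2 + a ^ 2 * φ t ^ 2)) = 1) :
    (∫ t in Ioo (0:ℝ) (1/2), φ t ^ 2) ≤ 1 / (κ + a ^ 2) := by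
  obtain ⟨hκ0, hroot, hmin⟩ := hκ
  have hω0 : 0 < Real.sqrt κ := Real.sqrt_pos.2 hκ0
  have hωπ : Real.sqrt κ < π := root_lt_pi_sq a κ ha ⟨hκ0, hroot, hmin⟩
  have hωκ : Real.sqrt κ ^ 2 = κ := Real.sq_sqrt hκ0.le
  have hpos : 0 < κ + a ^ 2 := by positivity
  have step1 : ∀ ε : ℝ, 0 < ε → ε < 1/2 →
      (κ + a ^ 2) * ∫ t in Ioo ε (1/2), φ t ^ 2 ≤ 1 := by
    intro ε hε0 hε2
    apply le_of_forall_pos_le_add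
    intro δ hδ0
    obtain ⟨T, hT1, hT2⟩ := exists_large_small (fun t => φ t ^ 2) hφ2 (δ / a)
      (by positivity) (1/2)
    have hkey := key_estimate a κ (Real.sqrt κ) ha hκ0 hω0 hωπ hωκ hroot φ hdiff hφ2 hφ'2
      hnorm ε T hε0 hε2 hT1
    have hb : a * φ T ^ 2 ≤ δ := by
      have h1 : φ T ^ 2 < δ / a := hT2
      rw [lt_div_iff₀ ha] at h1
      nlinarith
    linarith
  -- monotone limit
  have hmono_sets : Monotone (fun n : ℕ => Ioo ((1:ℝ)/(n+3)) (1/2)) := by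
    intro m n hmn
    apply Ioo_subset_Ioo _ le_rfl
    apply one_div_le_one_div_of_le (by positivity)
    have : (m:ℝ) ≤ n := Nat.cast_le.2 hmn
    linarith
  have hunion : (⋃ n : ℕ, Ioo ((1:ℝ)/(n+3)) (1/2)) = Ioo (0:ℝ) (1/2) := by
    ext x
    simp only [mem_iUnion, mem_Ioo]
    constructor
    · rintro ⟨n, h1, h2⟩
      exact ⟨lt_trans (by positivity) h1, h2⟩
    · rintro ⟨h1, h2⟩
      obtain ⟨n, hn⟩ := exists_nat_gt (1/x)
      refine ⟨n, ?_, h2⟩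
      have hx : 0 < 1/x := by positivity
      have h3 : 1/x < (n:ℝ) + 3 := by linarith
      calc (1:ℝ)/((n:ℝ)+3) < 1/(1/x) := one_div_lt_one_div_of_lt hx h3
        _ = x := one_div_one_div x
  have hfi : IntegrableOn (fun t => φ t ^ 2) (⋃ n : ℕ, Ioo ((1:ℝ)/(n+3)) (1/2)) := by
    rw [hunion]
    exact hφ2.mono_set (fun t ht => ht.1)
  have htend := tendsto_setIntegral_of_monotone (fun n => measurableSet_Ioo) hmono_sets hfi
  rw [hunion] at htend
  apply le_of_tendsto htend
  filter_upwards with n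
  have hlt : (1:ℝ)/((n:ℝ)+3) < 1/2 := by
    rw [div_lt_div_iff₀ (by positivity) (by norm_num)]
    have : (0:ℝ) ≤ n := Nat.cast_nonneg n
    linarith
  have := step1 ((1:ℝ)/((n:ℝ)+3)) (by positivity) hlt
  rw [le_div_iff₀ hpos]
  linarith
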